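/- Fix n ∈ ℕ, 0 < ε ≤ 1 and K ≥ 2^n·ε, and let (P, ṽ) be the packing game of the instability construction with weights w̃ (identical to w except w̃({r}) = 1 − ε). Then the allocation ỹ : P → ℝ defined by ỹ(r) = 1 − ε, ỹ(p_i^{(l)}) = l·K + 2^{l−2}·ε, and ỹ(q_i^{(l)}) = l·K − 2^{l−2}·ε for all l ∈ {1,…,n+2}, i ∈ {1,…,4}, lies in the core of (P, ṽ): ỹ(P) = ṽ(P) and ỹ(S) ≥ ṽ(S) for all S ⊆ P. -/

import Mathlib

/-- The players of the instability construction: a root `r`, and players `p i (l)`,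
`q i (l)` for levels `l ∈ {1, …, n+2}` (encoded by `Fin (n+2)`, level `= l.1 + 1`) and
`i ∈ {1, …, 4}`. -/
inductive Player (n : ℕ) : Type where
  | r : Player n
  | p : Fin (n + 2) → Fin 4 → Player n
  | q : Fin (n + 2) → Fin 4 → Player n
  deriving DecidableEq, Fintype

/-- Index set for the family `𝒮` of the instability construction. -/
inductive Idx (n : ℕ) : Type where
  | root : Idx n
  | rootP : Fin 4 → Idx n
  | pair : Fin (n + 2) → Fin 4 → Idx n
  | quad : Fin (n + 1) → Fin 4 → Idx n
  deriving DecidableEq, Fintype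

/-- The coalitions of the family `𝒮`: `{r}`; `{r, p_i^{(1)}}`; `{p_i^{(l)}, q_i^{(l)}}`;
and `{q_1^{(l)}, q_2^{(l)}, q_3^{(l)}, q_4^{(l)}, p_i^{(l+1)}}`. -/
def coal {n : ℕ} : Idx n → Finset (Player n)
  | .root => {Player.r}
  | .rootP i => {Player.r, Player.p 0 i}
  | .pair l i => {Player.p l i, Player.q l i}
  | .quad l i => {Player.q l.castSucc 0, Player.q l.castSucc 1, Player.q l.castSucc 2,
      Player.q l.castSucc 3, Player.p l.succ i}

/-- The weights of the family `𝒮`: `rootW` on `{r}` (which is `1` for `w` and `1 − ε` for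
`w̃`); `1` on `{r, p_i^{(1)}}`; `2·l·K` on `{p_i^{(l)}, q_i^{(l)}}`; and `4·l·K` on
`{q_1^{(l)}, …, q_4^{(l)}, p_i^{(l+1)}}`. -/
noncomputable def wt {n : ℕ} (K rootW : ℝ) : Idx n → ℝ
  | .root => rootW
  | .rootP _ => 1
  | .pair l _ => 2 * ((l.1 : ℝ) + 1) * K
  | .quad l _ => 4 * ((l.1 : ℝ) + 1) * K

/-- The packing game of the instability construction: `packV n K rootW S` is the maximum
total weight of a packing of pairwise disjoint members of `𝒮` inside `S` (the empty
packing is allowed). -/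
noncomputable def packV (n : ℕ) (K rootW : ℝ) (S : Finset (Player n)) : ℝ :=
  ((Finset.univ : Finset (Idx n)).powerset.filter (fun F =>
      (∀ j ∈ F, coal j ⊆ S) ∧
      ∀ j ∈ F, ∀ j' ∈ F, j ≠ j' → Disjoint (coal j) (coal j'))).sup'
    ⟨∅, by simp⟩ (fun F => ∑ j ∈ F, wt K rootW j)

/-- The allocation `ỹ` with `ỹ(r) = 1 − ε`,
`ỹ(p_i^{(l)}) = l·K + 2^{l−2}·ε` and `ỹ(q_i^{(l)}) = l·K − 2^{l−2}·ε` lies in the core of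
the perturbed packing game `(P, ṽ)` (root weight `1 − ε`, with `0 < ε ≤ 1` and
`K ≥ 2^n·ε`). -/
theorem stmt14 (n : ℕ) (ε K : ℝ) (hε0 : 0 < ε) (hε1 : ε ≤ 1) (hK : 2 ^ n * ε ≤ K)
    (yt : Player n → ℝ)
    (hyr : yt Player.r = 1 - ε)
    (hyp : ∀ (l : Fin (n + 2)) (i : Fin 4),
      yt (Player.p l i) = ((l.1 : ℝ) + 1) * K + 2 ^ ((l.1 : ℤ) - 1) * ε)
    (hyq : ∀ (l : Fin (n + 2)) (i : Fin 4),
      yt (Player.q l i) = ((l.1 : ℝ) + 1) * K - 2 ^ ((l.1 : ℤ) - 1) * ε) :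
    (∑ p, yt p) = packV n K (1 - ε) Finset.univ ∧
    ∀ S : Finset (Player n), packV n K (1 - ε) S ≤ ∑ p ∈ S, yt p := by
  have hK0 : 0 < K := lt_of_lt_of_le (by positivity) hK
  -- key power bound
  have hpow : ∀ m : ℤ, m ≤ (n : ℤ) → (2:ℝ) ^ m * ε ≤ K := by
    intro m hm
    refine le_trans ?_ hK
    have h1 : (2:ℝ) ^ m ≤ 2 ^ (n : ℤ) := zpow_le_zpow_right₀ one_le_two hm
    rw [zpow_natCast] at h1
    exact mul_le_mul_of_nonneg_right h1 hε0.le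
  have hpow0 : ∀ m : ℤ, (0:ℝ) < 2 ^ m * ε := fun m => by positivity
  have hdbl : ∀ m : ℤ, (2:ℝ) ^ m = 2 * 2 ^ (m - 1) := by
    intro m
    have := zpow_add_one₀ (two_ne_zero : (2:ℝ) ≠ 0) (m-1)
    simp at this; linarith
  -- nonnegativity
  have hy0 : ∀ p : Player n, 0 ≤ yt p := by
    intro p
    cases p with
    | r => rw [hyr]; linarith
    | p l i =>
        rw [hyp]
        have h1 := hpow0 ((l.1:ℤ)-1)
        have h2 : (0:ℝ) ≤ (l.1:ℝ) := Nat.cast_nonneg _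
        nlinarith
    | q l i =>
        rw [hyq]
        have h1 : (2:ℝ) ^ ((l.1:ℤ)-1) * ε ≤ K := by
          apply hpow; have := l.2; omega
        have h2 : (0:ℝ) ≤ (l.1:ℝ) * K := mul_nonneg (Nat.cast_nonneg _) hK0.le
        nlinarith
  -- sums over pair coalitions are exactly the weight
  have hpair : ∀ (l : Fin (n+2)) (i : Fin 4),
      ∑ p ∈ coal (Idx.pair l i : Idx n), yt p = 2 * ((l.1:ℝ) + 1) * K := by
    intro l i
    have hne : (Player.p l i : Player n) ≠ Player.q l i := by simp
    show ∑ p ∈ ({Player.p l i, Player.q l i} : Finset (Player n)), yt p = _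
    rw [Finset.sum_pair hne, hyp, hyq]; ring
  -- each coalition's y-sum dominates its weight
  have hcoal : ∀ j : Idx n, wt K (1-ε) j ≤ ∑ p ∈ coal j, yt p := by
    intro j
    cases j with
    | root => simp [coal, wt, hyr]
    | rootP i =>
        have hne : (Player.r : Player n) ≠ Player.p 0 i := by simp
        show (1:ℝ) ≤ ∑ p ∈ ({Player.r, Player.p 0 i} : Finset (Player n)), yt p
        rw [Finset.sum_pair hne, hyr, hyp]
        have h0 : ((0 : Fin (n+2)).1 : ℝ) = 0 := by norm_num
        have h0' : (((0 : Fin (n+2)).1 : ℤ) - 1) = -1 := by norm_num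
        rw [h0, h0']
        have h2 : (2:ℝ) ^ (-1 : ℤ) = 1/2 := by norm_num
        rw [h2]
        have h3 : (1:ℝ) ≤ 2 ^ n := one_le_pow₀ one_le_two
        nlinarith
    | pair l i => rw [hpair l i]; exact le_refl _
    | quad l i =>
        show 4 * ((l.1:ℝ) + 1) * K ≤ _
        have hsum : ∑ p ∈ coal (Idx.quad l i : Idx n), yt p =
            (∑ k : Fin 4, yt (Player.q l.castSucc k)) + yt (Player.p l.succ i) := by
          show ∑ p ∈ ({Player.q l.castSucc 0, Player.q l.castSucc 1, Player.q l.castSucc 2,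
              Player.q l.castSucc 3, Player.p l.succ i} : Finset (Player n)), yt p = _
          rw [Finset.sum_insert (by simp [Fin.ext_iff] <;> decide),
              Finset.sum_insert (by simp [Fin.ext_iff] <;> decide),
              Finset.sum_insert (by simp [Fin.ext_iff] <;> decide),
              Finset.sum_insert (by simp [Fin.ext_iff] <;> decide),
              Finset.sum_singleton, Fin.sum_univ_four]
          ring
        rw [hsum]
        have hcs : ((l.castSucc.1 : ℕ) : ℝ) = (l.1 : ℝ) := by norm_num
        have hcsz : ((l.castSucc.1 : ℕ) : ℤ) = (l.1 : ℤ) := by norm_num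
        have hsz : ((l.succ.1 : ℕ) : ℤ) = (l.1 : ℤ) + 1 := by
          simp [Fin.val_succ]
        have hsr : ((l.succ.1 : ℕ) : ℝ) = (l.1 : ℝ) + 1 := by
          simp [Fin.val_succ]
        simp only [hyq, hyp, Fin.sum_univ_four, hcs, hcsz, hsz, hsr]
        have hA : (2:ℝ) ^ ((l.1:ℤ) + 1 - 1) * ε ≤ K := by
          apply hpow; have := l.2; omega
        have hrel : (2:ℝ) ^ ((l.1:ℤ) + 1 - 1) = 2 * 2 ^ ((l.1:ℤ) - 1) := by
          have := hdbl ((l.1:ℤ) + 1 - 1); simpa using this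
        have h2 : (0:ℝ) ≤ (l.1:ℝ) * K := mul_nonneg (Nat.cast_nonneg _) hK0.le
        nlinarith
  -- core inequality for all S
  have hcore : ∀ S : Finset (Player n), packV n K (1-ε) S ≤ ∑ p ∈ S, yt p := by
    intro S
    apply Finset.sup'_le
    intro F hF
    simp only [Finset.mem_filter, Finset.mem_powerset] at hF
    obtain ⟨-, hsub, hdisj⟩ := hF
    have hpd : (↑F : Set (Idx n)).PairwiseDisjoint coal := by
      intro j hj j' hj' hne
      exact hdisj j (Finset.mem_coe.mp hj) j' (Finset.mem_coe.mp hj') hne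
    calc ∑ j ∈ F, wt K (1-ε) j ≤ ∑ j ∈ F, ∑ p ∈ coal j, yt p :=
          Finset.sum_le_sum (fun j _ => hcoal j)
      _ = ∑ p ∈ F.biUnion coal, yt p := (Finset.sum_biUnion hpd).symm
      _ ≤ ∑ p ∈ S, yt p := by
          apply Finset.sum_le_sum_of_subset_of_nonneg
          · intro p hp
            obtain ⟨j, hj, hpj⟩ := Finset.mem_biUnion.mp hp
            exact hsub j hj hpj
          · exact fun p _ _ => hy0 p
  refine ⟨?_, hcore⟩
  -- the tight packing: {r} together with all pairs
  set F0 : Finset (Idx n) :=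
    insert Idx.root ((Finset.univ : Finset (Fin (n+2) × Fin 4)).image
      fun x => Idx.pair x.1 x.2) with hF0def
  have hmemF0 : ∀ j : Idx n, j ∈ F0 ↔ (j = Idx.root ∨ ∃ l i, j = Idx.pair l i) := by
    intro j
    simp only [hF0def, Finset.mem_insert, Finset.mem_image, Finset.mem_univ, true_and,
      Prod.exists]
    constructor
    · rintro (h | ⟨l, i, h⟩)
      · exact Or.inl h
      · exact Or.inr ⟨l, i, h.symm⟩
    · rintro (h | ⟨l, i, h⟩)
      · exact Or.inl h
      · exact Or.inr ⟨l, i, h.symm⟩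
  have hdisj0 : ∀ j ∈ F0, ∀ j' ∈ F0, j ≠ j' → Disjoint (coal j) (coal j') := by
    intro j hj j' hj' hne
    rw [hmemF0] at hj hj'
    rw [Finset.disjoint_left]
    rcases hj with rfl | ⟨l, i, rfl⟩ <;> rcases hj' with rfl | ⟨l', i', rfl⟩
    · exact absurd rfl hne
    · intro a ha ha'
      simp only [coal, Finset.mem_singleton, Finset.mem_insert] at ha ha'
      subst ha; rcases ha' with h | h <;> exact nomatch h
    · intro a ha ha'
      simp only [coal, Finset.mem_singleton, Finset.mem_insert] at ha ha'
      subst ha'; rcases ha with h | h <;> exact nomatch h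
    · intro a ha ha'
      have hne2 : (l, i) ≠ (l', i') := by
        intro h; apply hne; rw [Prod.mk.injEq] at h; rw [h.1, h.2]
      simp only [coal, Finset.mem_insert, Finset.mem_singleton] at ha ha'
      rcases ha with rfl | rfl
      · rcases ha' with h | h
        · obtain ⟨h1, h2⟩ := Player.p.inj h
          exact hne2 (by rw [Prod.mk.injEq]; exact ⟨h1, h2⟩)
        · exact nomatch h
      · rcases ha' with h | h
        · exact nomatch h
        · obtain ⟨h1, h2⟩ := Player.q.inj h
          exact hne2 (by rw [Prod.mk.injEq]; exact ⟨h1, h2⟩)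
  have hcover : F0.biUnion coal = Finset.univ := by
    apply Finset.eq_univ_of_forall
    intro p
    rw [Finset.mem_biUnion]
    cases p with
    | r => exact ⟨Idx.root, (hmemF0 _).mpr (Or.inl rfl), by simp [coal]⟩
    | p l i => exact ⟨Idx.pair l i, (hmemF0 _).mpr (Or.inr ⟨l, i, rfl⟩), by simp [coal]⟩
    | q l i => exact ⟨Idx.pair l i, (hmemF0 _).mpr (Or.inr ⟨l, i, rfl⟩), by simp [coal]⟩
  have hpd0 : (↑F0 : Set (Idx n)).PairwiseDisjoint coal := by
    intro j hj j' hj' hne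
    exact hdisj0 j (Finset.mem_coe.mp hj) j' (Finset.mem_coe.mp hj') hne
  have htight : ∀ j ∈ F0, (∑ p ∈ coal j, yt p) = wt K (1-ε) j := by
    intro j hj
    rw [hmemF0] at hj
    rcases hj with rfl | ⟨l, i, rfl⟩
    · simp [coal, wt, hyr]
    · rw [hpair l i]; rfl
  have heq : (∑ p, yt p) = ∑ j ∈ F0, wt K (1-ε) j := by
    rw [← hcover, Finset.sum_biUnion hpd0]
    exact Finset.sum_congr rfl htight
  have hmemfilter : F0 ∈ (Finset.univ : Finset (Idx n)).powerset.filter (fun F =>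
      (∀ j ∈ F, coal j ⊆ (Finset.univ : Finset (Player n))) ∧
      ∀ j ∈ F, ∀ j' ∈ F, j ≠ j' → Disjoint (coal j) (coal j')) := by
    rw [Finset.mem_filter, Finset.mem_powerset]
    exact ⟨Finset.subset_univ _, fun j _ => Finset.subset_univ _, hdisj0⟩
  have hle : ∑ j ∈ F0, wt K (1-ε) j ≤ packV n K (1-ε) Finset.univ :=
    Finset.le_sup' (fun F => ∑ j ∈ F, wt K (1-ε) j) hmemfilter
  exact le_antisymm (by rw [heq]; exact hle) (hcore Finset.univ)
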